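/- Let G be a finite weighted graph with U(1)-signature s and μ : V → ℝ₊. For every nonzero f : V → ℂ there exists t' ∈ [0, max_u |f(u)|²] such that the level set V^f(√t') = { u : |f(u)| ≥ √t' } satisfies (ι^s(V^f(√t')) + |E(V^f(√t'), complement)|) / vol_μ(V^f(√t')) ≤ (3/2) √(2 d_μ R_μ^s(f)), where d_μ = max_u (Σ_{v~u} w_{uv})/μ(u). -/

import Mathlib

open Finset

open Finset

lemma tele_aux (b : ℕ → ℝ) (n : ℕ) (c : ℝ)
    (hb : Antitone b) (hgap : ∀ i, c < b i → c ≤ b (i + 1)) :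
    ∑ i ∈ range n, (b i - b (i + 1)) * (if b i ≤ c then 1 else 0)
      = min c (b 0) - min c (b n) := by
  rw [← Finset.sum_range_sub' (fun i => min c (b i)) n]
  apply Finset.sum_congr rfl
  intro i _
  by_cases h : b i ≤ c
  · rw [if_pos h, mul_one, min_eq_right h, min_eq_right ((hb (Nat.le_succ i)).trans h)]
  · push_neg at h
    rw [if_neg (not_le.mpr h), mul_zero, min_eq_left h.le, min_eq_left (hgap i h)]
    ring

lemma aux4 (x y : ℝ) (hy : 0 ≤ y) (hxy : y ≤ x) : (0:ℝ) ≤ x*y*(x+y)^2 - 4*y^4 := by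
  have h1 : y^3 ≤ x^3 := pow_le_pow_left₀ hy hxy 3
  have h2 : y^2 ≤ x^2 := pow_le_pow_left₀ hy hxy 2
  nlinarith [mul_le_mul_of_nonneg_left h1 hy, mul_le_mul_of_nonneg_left h2 (mul_nonneg hy hy),
    mul_le_mul_of_nonneg_left hxy (mul_nonneg (mul_nonneg hy hy) hy)]

lemma edge_sq (x y c : ℝ) (hy : 0 ≤ y) (hxy : y ≤ x) (hc : 0 ≤ c) :
    (y^2*c + (x^2 - y^2))^2 ≤ (9/4) * ((x-y)^2 + x*y*c^2) * (x+y)^2 := by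
  nlinarith [sq_nonneg (5*(x-y)*(x+y) - 4*y^2*c),
    mul_nonneg (sq_nonneg c) (aux4 x y hy hxy),
    mul_nonneg (mul_nonneg (mul_nonneg (hy.trans hxy) hy) (sq_nonneg c)) (sq_nonneg (x+y))]

lemma edge_ineq (x y c : ℝ) (hy : 0 ≤ y) (hxy : y ≤ x) (hc : 0 ≤ c) :
    y^2*c + (x^2 - y^2) ≤ (3/2) * Real.sqrt ((x-y)^2 + x*y*c^2) * (x+y) := by
  have hx : 0 ≤ x := hy.trans hxy
  have hE : (0:ℝ) ≤ (x-y)^2 + x*y*c^2 := by positivity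
  have hL : 0 ≤ y^2*c + (x^2 - y^2) := by nlinarith
  have h1 : y^2*c + (x^2 - y^2) ≤ Real.sqrt (((3/2)*(x+y))^2 * ((x-y)^2 + x*y*c^2)) := by
    rw [Real.le_sqrt hL (by positivity)]
    nlinarith [edge_sq x y c hy hxy hc]
  calc y^2*c + (x^2 - y^2) ≤ _ := h1
    _ = (3/2) * Real.sqrt ((x-y)^2 + x*y*c^2) * (x+y) := by
        rw [Real.sqrt_mul (sq_nonneg _), Real.sqrt_sq (by positivity)]
        ring

lemma norm_identity (a b : ℂ) (ha : a ≠ 0) (hb : b ≠ 0) :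
    ‖a - b‖^2 = (‖a‖ - ‖b‖)^2 + ‖a‖*‖b‖*‖(‖a‖⁻¹:ℝ) • a - (‖b‖⁻¹:ℝ) • b‖^2 := by
  have hx : (0:ℝ) < ‖a‖ := norm_pos_iff.mpr ha
  have hy : (0:ℝ) < ‖b‖ := norm_pos_iff.mpr hb
  rw [norm_sub_sq_real, norm_sub_sq_real]
  rw [real_inner_smul_left, real_inner_smul_right, norm_smul, norm_smul]
  simp only [Real.norm_eq_abs, abs_inv, abs_norm]
  have hxne : ‖a‖ ≠ 0 := by simpa using hx.ne'
  have hyne : ‖b‖ ≠ 0 := by simpa using hy.ne'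
  field_simp [hxne, hyne]
  ring

lemma edge_main_half (a b : ℂ) (ta tb : ℂ) (hta : ‖ta‖ = 1) (htb : ‖tb‖ = 1)
    (ha : a ≠ 0 → ta = (‖a‖⁻¹:ℝ) • a) (hb : b ≠ 0 → tb = (‖b‖⁻¹:ℝ) • b)
    (hba : ‖b‖ ≤ ‖a‖) :
    min (‖a‖^2) (‖b‖^2) * ‖ta - tb‖ + |‖a‖^2 - ‖b‖^2| ≤ 3/2 * ‖a - b‖ * (‖a‖ + ‖b‖) := by
  have hy2 : ‖b‖^2 ≤ ‖a‖^2 := by nlinarith [norm_nonneg b]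
  rw [min_eq_right hy2, abs_of_nonneg (by linarith)]
  by_cases hb0 : b = 0
  · subst hb0
    simp only [norm_zero, sub_zero]
    nlinarith [norm_nonneg a, norm_nonneg (ta - tb), sq_nonneg (‖a‖ * ‖ta - tb‖)]
  · have ha0 : a ≠ 0 := by
      intro h; subst h
      exact hb0 (norm_le_zero_iff.mp (by simpa using hba))
    have hid := norm_identity a b ha0 hb0
    rw [ha ha0, hb hb0] at *
    have key := edge_ineq ‖a‖ ‖b‖ ‖(‖a‖⁻¹:ℝ) • a - (‖b‖⁻¹:ℝ) • b‖ (norm_nonneg b) hba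
      (norm_nonneg _)
    rw [← hid, Real.sqrt_sq (norm_nonneg _)] at key
    linarith

lemma edge_main (a b : ℂ) (ta tb : ℂ) (hta : ‖ta‖ = 1) (htb : ‖tb‖ = 1)
    (ha : a ≠ 0 → ta = (‖a‖⁻¹:ℝ) • a) (hb : b ≠ 0 → tb = (‖b‖⁻¹:ℝ) • b) :
    min (‖a‖^2) (‖b‖^2) * ‖ta - tb‖ + |‖a‖^2 - ‖b‖^2| ≤ 3/2 * ‖a - b‖ * (‖a‖ + ‖b‖) := by
  rcases le_total ‖b‖ ‖a‖ with h | h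
  · exact edge_main_half a b ta tb hta htb ha hb h
  · have := edge_main_half b a tb ta htb hta hb ha h
    rw [min_comm, norm_sub_rev, abs_sub_comm, norm_sub_rev b a] at this
    linarith

lemma filter_double {V : Type*} [Fintype V] (g : V → V → ℝ) (p q : V → Prop)
    [DecidablePred p] [DecidablePred q] :
    ∑ u ∈ univ.filter p, ∑ v ∈ univ.filter q, g u v
      = ∑ u : V, ∑ v : V, (if p u then (1:ℝ) else 0) * ((if q v then (1:ℝ) else 0) * g u v) := by
  rw [Finset.sum_filter]
  refine Finset.sum_congr rfl fun u _ => ?_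
  rw [Finset.sum_filter]
  split_ifs with h
  · refine Finset.sum_congr rfl fun v _ => ?_
    split_ifs <;> ring
  · rw [eq_comm]
    apply Finset.sum_eq_zero
    intro v _; ring


/-- Rayleigh quotient of `f` for the magnetic Laplacian with weights `w`,
vertex measure `μ` and signature `s` (each unordered edge counted once). -/
noncomputable def rayleigh {V : Type*} [Fintype V] (G : SimpleGraph V) [DecidableRel G.Adj]
    (w : V → V → ℝ) (μ : V → ℝ) (s : V → V → ℂ) (f : V → ℂ) : ℝ :=
  ((1 / 2) * ∑ u : V, ∑ v : V, if G.Adj u v then w u v * ‖f u - s u v * f v‖ ^ 2 else 0) /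
    (∑ u : V, ‖f u‖ ^ 2 * μ u)

/-- The first eigenvalue of the magnetic Laplacian, characterized by the
variational (min-max) principle as the infimum of Rayleigh quotients. -/
noncomputable def lam1 {V : Type*} [Fintype V] (G : SimpleGraph V) [DecidableRel G.Adj]
    (w : V → V → ℝ) (μ : V → ℝ) (s : V → V → ℂ) : ℝ :=
  sInf { x : ℝ | ∃ f : V → ℂ, f ≠ 0 ∧ x = rayleigh G w μ s f }

/-- Frustration index of `V1` with `U(1)`-valued switching functions. -/
noncomputable def frusIdx {V : Type*} [Fintype V] (G : SimpleGraph V) [DecidableRel G.Adj]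
    (w : V → V → ℝ) (s : V → V → ℂ) (V1 : Finset V) : ℝ :=
  sInf { x : ℝ | ∃ τ : V → ℂ, (∀ u, ‖τ u‖ = 1) ∧
    x = (1 / 2) * ∑ u ∈ V1, ∑ v ∈ V1, if G.Adj u v then w u v * ‖τ u - s u v * τ v‖ else 0 }

/-- Weighted boundary measure `|E(V1, V1ᶜ)|`. -/
noncomputable def bdry {V : Type*} [Fintype V] [DecidableEq V] (G : SimpleGraph V)
    [DecidableRel G.Adj] (w : V → V → ℝ) (V1 : Finset V) : ℝ :=
  ∑ u ∈ V1, ∑ v ∈ V1ᶜ, if G.Adj u v then w u v else 0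

/-- `μ`-volume of `V1`. -/
noncomputable def vol {V : Type*} [Fintype V] (μ : V → ℝ) (V1 : Finset V) : ℝ :=
  ∑ u ∈ V1, μ u

/-- The Cheeger constant `h₁ˢ(μ)`. -/
noncomputable def cheeger1 {V : Type*} [Fintype V] [DecidableEq V] (G : SimpleGraph V)
    [DecidableRel G.Adj] (w : V → V → ℝ) (μ : V → ℝ) (s : V → V → ℂ) : ℝ :=
  sInf { x : ℝ | ∃ V1 : Finset V, V1.Nonempty ∧
    x = (frusIdx G w s V1 + bdry G w V1) / vol μ V1 }

/-- Maximal `μ`-degree `d_μ`. -/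
noncomputable def dmu {V : Type*} [Fintype V] (G : SimpleGraph V) [DecidableRel G.Adj]
    (w : V → V → ℝ) (μ : V → ℝ) : ℝ :=
  ⨆ u : V, (∑ v : V, if G.Adj u v then w u v else 0) / μ u

open scoped Classical

set_option maxHeartbeats 1000000

theorem stmt_9 {V : Type*} [Fintype V] [DecidableEq V] [Nonempty V]
    (G : SimpleGraph V) [DecidableRel G.Adj]
    (w : V → V → ℝ) (μ : V → ℝ) (s : V → V → ℂ)
    (hw_sym : ∀ u v, w u v = w v u)
    (hw_pos : ∀ u v, G.Adj u v → 0 < w u v)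
    (hμ : ∀ u, 0 < μ u)
    (hs_unit : ∀ u v, G.Adj u v → ‖s u v‖ = 1)
    (hs_inv : ∀ u v, G.Adj u v → s v u = (s u v)⁻¹)
    (f : V → ℂ) (hf : f ≠ 0) :
    ∃ t' : ℝ, 0 ≤ t' ∧ t' ≤ (⨆ u : V, ‖f u‖ ^ 2) ∧
      (frusIdx G w s (Finset.univ.filter fun u => Real.sqrt t' ≤ ‖f u‖) +
          bdry G w (Finset.univ.filter fun u => Real.sqrt t' ≤ ‖f u‖)) /
        vol μ (Finset.univ.filter fun u => Real.sqrt t' ≤ ‖f u‖) ≤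
      (3 / 2) * Real.sqrt (2 * dmu G w μ * rayleigh G w μ s f) := by
  classical
  set a : V → ℝ := fun u => ‖f u‖^2 with ha_def
  have ha_nonneg : ∀ u, 0 ≤ a u := fun u => sq_nonneg _
  set n := Fintype.card V with hn
  obtain ⟨e, he⟩ : ∃ (e : Fin n ≃ V), Antitone (fun i => a (e i)) := by
    let e0 : Fin n ≃ V := (Fintype.equivFin V).symm
    let π := Tuple.sort (fun i => -a (e0 i))
    exact ⟨π.trans e0, fun i j hij => by
      simpa [π] using Tuple.monotone_sort (fun i => -a (e0 i)) hij⟩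
  set b : ℕ → ℝ := fun i => if h : i < n then a (e ⟨i, h⟩) else 0 with hb_def
  have hb_nonneg : ∀ i, 0 ≤ b i := by
    intro i; simp only [hb_def]
    split
    · exact ha_nonneg _
    · exact le_refl 0
  have hb_anti : Antitone b := by
    intro i j hij
    by_cases hj : j < n
    · have hi : i < n := lt_of_le_of_lt hij hj
      simp only [hb_def, dif_pos hi, dif_pos hj]
      exact he (show (⟨i,hi⟩ : Fin n) ≤ ⟨j,hj⟩ from hij)
    · simp only [hb_def, dif_neg hj]
      exact hb_nonneg i
  have hb_n : b n = 0 := dif_neg (lt_irrefl n)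
  have hb_val : ∀ u : V, b ((e.symm u : Fin n) : ℕ) = a u := by
    intro u
    have h : ((e.symm u : Fin n) : ℕ) < n := (e.symm u).isLt
    simp only [hb_def, dif_pos h, Fin.eta, Equiv.apply_symm_apply]
  have tele_c : ∀ c : ℝ, (∃ u : V, a u = c) →
      ∑ i ∈ range n, (b i - b (i+1)) * (if b i ≤ c then 1 else 0) = c := by
    rintro c ⟨u, rfl⟩
    have hgap : ∀ i, a u < b i → a u ≤ b (i + 1) := by
      intro i hi
      have hij : i < ((e.symm u : Fin n) : ℕ) := by
        by_contra hcon
        push_neg at hcon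
        exact absurd ((hb_val u) ▸ hb_anti hcon) (not_le.mpr hi)
      exact (hb_val u) ▸ hb_anti (Nat.succ_le_of_lt hij)
    rw [tele_aux b n (a u) hb_anti hgap]
    have h1 : a u ≤ b 0 := (hb_val u) ▸ hb_anti (Nat.zero_le _)
    rw [hb_n, min_eq_left h1, min_eq_right (ha_nonneg u), sub_zero]
  set τ : V → ℂ := fun u => if f u = 0 then 1 else (‖f u‖⁻¹ : ℝ) • f u with hτ_def
  have hτ : ∀ u, ‖τ u‖ = 1 := by
    intro u; simp only [hτ_def]
    split
    · simp
    · rename_i h0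
      rw [norm_smul, Real.norm_eq_abs, abs_inv, abs_norm]
      exact inv_mul_cancel₀ (norm_ne_zero_iff.mpr h0)
  set c : V → V → ℝ := fun u v => ‖τ u - s u v * τ v‖ with hc_def
  have hc_nonneg : ∀ u v, 0 ≤ c u v := fun u v => norm_nonneg _
  have edge_bd : ∀ u v, G.Adj u v →
      min (a u) (a v) * c u v + |a u - a v| ≤
        3/2 * ‖f u - s u v * f v‖ * (‖f u‖ + ‖f v‖) := by
    intro u v huv
    have hsu : ‖s u v‖ = 1 := hs_unit u v huv
    have hnb : ‖s u v * f v‖ = ‖f v‖ := by rw [norm_mul, hsu, one_mul]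
    have key := edge_main (f u) (s u v * f v) (τ u) (s u v * τ v) (hτ u)
      (by rw [norm_mul, hsu, one_mul, hτ v])
      (fun h0 => by simp only [hτ_def, if_neg h0])
      (fun h0 => by
        have hfv : f v ≠ 0 := by
          intro h; exact h0 (by rw [h, mul_zero])
        simp only [hτ_def, if_neg hfv, hnb]
        rw [mul_smul_comm])
    rw [hnb] at key
    exact key
  have c_symm : ∀ u v, G.Adj u v → c v u = c u v := by
    intro u v huv
    have hsu : ‖s u v‖ = 1 := hs_unit u v huv
    have hs0 : s u v ≠ 0 := by
      intro h; rw [h, norm_zero] at hsu; norm_num at hsu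
    simp only [hc_def, hs_inv u v huv]
    have : τ v - (s u v)⁻¹ * τ u = (s u v)⁻¹ * (s u v * τ v - τ u) := by
      field_simp
    rw [this, norm_mul, norm_inv, hsu, inv_one, one_mul, norm_sub_rev]
  set S : ℝ → Finset V := fun t => univ.filter (fun u => t ≤ a u) with hS_def
  set D : ℝ := ∑ u : V, a u * μ u with hD_def
  have hD_pos : 0 < D := by
    obtain ⟨u0, hu0⟩ : ∃ u, f u ≠ 0 := by
      by_contra hcon; push_neg at hcon; exact hf (funext hcon)
    apply Finset.sum_pos' (fun u _ => mul_nonneg (ha_nonneg u) (hμ u).le)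
    exact ⟨u0, mem_univ _, mul_pos (pow_pos (norm_pos_iff.mpr hu0) 2) (hμ u0)⟩
  set d := dmu G w μ with hd_def
  set R := rayleigh G w μ s f with hR_def
  set K := (3/(2:ℝ)) * Real.sqrt (2 * d * R) with hK_def
  set δ : ℕ → ℝ := fun i => b i - b (i+1) with hδ_def
  have hδ_nonneg : ∀ i, 0 ≤ δ i := fun i => sub_nonneg.mpr (hb_anti (Nat.le_succ i))
  have vol_eq : ∀ t : ℝ, vol μ (S t) = ∑ u : V, (if t ≤ a u then (1:ℝ) else 0) * μ u := by
    intro t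
    rw [show vol μ (S t) = ∑ u ∈ univ.filter (fun u => t ≤ a u), μ u from rfl,
      Finset.sum_filter]
    exact Finset.sum_congr rfl fun u _ => by split_ifs <;> ring
  have vol_sum : ∑ i ∈ range n, δ i * vol μ (S (b i)) = D := by
    calc ∑ i ∈ range n, δ i * vol μ (S (b i))
        = ∑ i ∈ range n, ∑ u : V, δ i * ((if b i ≤ a u then (1:ℝ) else 0) * μ u) := by
          refine Finset.sum_congr rfl fun i _ => ?_
          rw [vol_eq, Finset.mul_sum]
      _ = ∑ u : V, ∑ i ∈ range n, δ i * ((if b i ≤ a u then (1:ℝ) else 0) * μ u) :=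
          Finset.sum_comm
      _ = ∑ u : V, a u * μ u := by
          refine Finset.sum_congr rfl fun u _ => ?_
          have : ∑ i ∈ range n, δ i * ((if b i ≤ a u then (1:ℝ) else 0) * μ u)
              = (∑ i ∈ range n, δ i * (if b i ≤ a u then (1:ℝ) else 0)) * μ u := by
            rw [Finset.sum_mul]
            exact Finset.sum_congr rfl fun i _ => by ring
          rw [this, tele_c (a u) ⟨u, rfl⟩]
  -- upper bound for frustration index
  have frus_le : ∀ t : ℝ, frusIdx G w s (S t) ≤
      (1/2) * ∑ u ∈ S t, ∑ v ∈ S t, if G.Adj u v then w u v * c u v else 0 := by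
    intro t
    apply csInf_le
    · refine ⟨0, fun x hx => ?_⟩
      obtain ⟨σ, hσ, rfl⟩ := hx
      apply mul_nonneg (by norm_num)
      refine Finset.sum_nonneg fun u _ => Finset.sum_nonneg fun v _ => ?_
      split_ifs with h
      · exact mul_nonneg (hw_pos u v h).le (norm_nonneg _)
      · exact le_refl 0
    · exact ⟨τ, hτ, by simp only [hc_def]⟩
  -- expansion of boundary
  have bdry_eq : ∀ t : ℝ, bdry G w (S t)
      = ∑ u : V, ∑ v : V, (if t ≤ a u then (1:ℝ) else 0) *
          ((1 - (if t ≤ a v then (1:ℝ) else 0)) * (if G.Adj u v then w u v else 0)) := by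
    intro t
    have hcompl : (S t)ᶜ = univ.filter (fun u => ¬ t ≤ a u) := by
      simp only [hS_def]; ext x; simp
    rw [show bdry G w (S t) = ∑ u ∈ S t, ∑ v ∈ (S t)ᶜ, if G.Adj u v then w u v else 0 from rfl,
      hcompl, hS_def, filter_double]
    refine Finset.sum_congr rfl fun u _ => Finset.sum_congr rfl fun v _ => ?_
    by_cases h2 : t ≤ a v <;> simp [h2]
  have Fτ_eq : ∀ t : ℝ, (1/2) * ∑ u ∈ S t, ∑ v ∈ S t, (if G.Adj u v then w u v * c u v else 0)
      = ∑ u : V, ∑ v : V, (if t ≤ a u then (1:ℝ) else 0) *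
          ((if t ≤ a v then (1:ℝ) else 0) * ((1/2) * (if G.Adj u v then w u v * c u v else 0))) := by
    intro t
    rw [hS_def, filter_double, Finset.mul_sum]
    refine Finset.sum_congr rfl fun u _ => ?_
    rw [Finset.mul_sum]
    exact Finset.sum_congr rfl fun v _ => by ring
  have main_le1 : ∑ i ∈ range n, δ i *
      (((1/2) * ∑ u ∈ S (b i), ∑ v ∈ S (b i), if G.Adj u v then w u v * c u v else 0)
        + bdry G w (S (b i)))
      = ∑ u : V, ∑ v : V, if G.Adj u v then
          w u v * ((1/2) * (c u v * min (a u) (a v)) + (a u - min (a u) (a v))) else 0 := by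
    have step1 : ∀ i, δ i *
        (((1/2) * ∑ u ∈ S (b i), ∑ v ∈ S (b i), if G.Adj u v then w u v * c u v else 0)
          + bdry G w (S (b i)))
        = ∑ u : V, ∑ v : V, δ i *
            ((if b i ≤ a u then (1:ℝ) else 0) *
              ((if b i ≤ a v then (1:ℝ) else 0) * ((1/2) * (if G.Adj u v then w u v * c u v else 0)))
            + (if b i ≤ a u then (1:ℝ) else 0) *
              ((1 - (if b i ≤ a v then (1:ℝ) else 0)) * (if G.Adj u v then w u v else 0))) := by
      intro i
      rw [Fτ_eq, bdry_eq, ← Finset.sum_add_distrib, Finset.mul_sum]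
      refine Finset.sum_congr rfl fun u _ => ?_
      rw [← Finset.sum_add_distrib, Finset.mul_sum]
    rw [Finset.sum_congr rfl fun i _ => step1 i, Finset.sum_comm]
    refine Finset.sum_congr rfl fun u _ => ?_
    rw [Finset.sum_comm]
    refine Finset.sum_congr rfl fun v _ => ?_
    by_cases hadj : G.Adj u v
    · simp only [if_pos hadj]
      have hterm : ∀ i, δ i *
          ((if b i ≤ a u then (1:ℝ) else 0) *
            ((if b i ≤ a v then (1:ℝ) else 0) * ((1/2) * (w u v * c u v)))
          + (if b i ≤ a u then (1:ℝ) else 0) *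
            ((1 - (if b i ≤ a v then (1:ℝ) else 0)) * w u v))
          = ((1/2) * (w u v * c u v) - w u v) * ((b i - b (i+1)) * (if b i ≤ min (a u) (a v) then 1 else 0))
            + w u v * ((b i - b (i+1)) * (if b i ≤ a u then 1 else 0)) := by
        intro i
        by_cases h1 : b i ≤ a u <;> by_cases h2 : b i ≤ a v <;>
          simp only [hδ_def, h1, h2, le_min_iff, and_true, true_and, if_true, if_false,
            and_false, false_and, if_neg, if_pos, not_true, not_false_iff] <;>
          simp [h1, h2] <;> ring
      rw [Finset.sum_congr rfl fun i _ => hterm i, Finset.sum_add_distrib,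
        ← Finset.mul_sum, ← Finset.mul_sum]
      have hminmem : ∃ u' : V, a u' = min (a u) (a v) := by
        rcases min_choice (a u) (a v) with h | h
        · exact ⟨u, h.symm⟩
        · exact ⟨v, h.symm⟩
      rw [tele_c _ hminmem, tele_c (a u) ⟨u, rfl⟩]
      ring
    · simp only [if_neg hadj]
      apply Finset.sum_eq_zero
      intro i _
      ring
  have abs_min : ∀ x y : ℝ, x + y - 2 * min x y = |x - y| := by
    intro x y; rcases le_total x y with h | h
    · rw [min_eq_left h, abs_of_nonpos (by linarith)]; ring
    · rw [min_eq_right h, abs_of_nonneg (by linarith)]; ring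
  set Q2 : ℝ := ∑ u : V, ∑ v : V, if G.Adj u v then
      w u v * (‖f u - s u v * f v‖ * (‖f u‖ + ‖f v‖)) else 0 with hQ2_def
  have main_le2 : (∑ u : V, ∑ v : V, if G.Adj u v then
          w u v * ((1/2) * (c u v * min (a u) (a v)) + (a u - min (a u) (a v))) else 0)
      ≤ (3/2) * ((1/2) * Q2) := by
    have hswap : (∑ u : V, ∑ v : V, (if G.Adj u v then
          w u v * ((1/2) * (c u v * min (a u) (a v)) + (a u - min (a u) (a v))) else 0))
        = ∑ u : V, ∑ v : V, (if G.Adj u v then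
          w u v * ((1/2) * (c u v * min (a u) (a v)) + (a v - min (a u) (a v))) else 0) := by
      rw [Finset.sum_comm]
      refine Finset.sum_congr rfl fun u _ => Finset.sum_congr rfl fun v _ => ?_
      by_cases hadj : G.Adj u v
      · rw [if_pos hadj.symm, if_pos hadj, hw_sym v u, c_symm u v hadj, min_comm (a v)]
      · rw [if_neg (fun h => hadj h.symm), if_neg hadj]
    have hdou : (∑ u : V, ∑ v : V, (if G.Adj u v then
          w u v * ((1/2) * (c u v * min (a u) (a v)) + (a u - min (a u) (a v))) else 0))
        + (∑ u : V, ∑ v : V, (if G.Adj u v then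
          w u v * ((1/2) * (c u v * min (a u) (a v)) + (a u - min (a u) (a v))) else 0))
        = ∑ u : V, ∑ v : V, (if G.Adj u v then
          w u v * (c u v * min (a u) (a v) + |a u - a v|) else 0) := by
      nth_rewrite 2 [hswap]
      rw [← Finset.sum_add_distrib]
      refine Finset.sum_congr rfl fun u _ => ?_
      rw [← Finset.sum_add_distrib]
      refine Finset.sum_congr rfl fun v _ => ?_
      by_cases hadj : G.Adj u v
      · rw [if_pos hadj, if_pos hadj, if_pos hadj, ← abs_min]
        ring
      · simp [hadj]
    have hbound : (∑ u : V, ∑ v : V, (if G.Adj u v then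
          w u v * (c u v * min (a u) (a v) + |a u - a v|) else 0))
        ≤ ∑ u : V, ∑ v : V, (if G.Adj u v then
          (3/2) * (w u v * (‖f u - s u v * f v‖ * (‖f u‖ + ‖f v‖))) else 0) := by
      refine Finset.sum_le_sum fun u _ => Finset.sum_le_sum fun v _ => ?_
      by_cases hadj : G.Adj u v
      · rw [if_pos hadj, if_pos hadj]
        have h' := mul_le_mul_of_nonneg_left (edge_bd u v hadj) (hw_pos u v hadj).le
        calc w u v * (c u v * min (a u) (a v) + |a u - a v|)
            = w u v * (min (a u) (a v) * c u v + |a u - a v|) := by ring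
          _ ≤ w u v * (3/2 * ‖f u - s u v * f v‖ * (‖f u‖ + ‖f v‖)) := h'
          _ = 3/2 * (w u v * (‖f u - s u v * f v‖ * (‖f u‖ + ‖f v‖))) := by ring
      · simp [hadj]
    have hfinal : (∑ u : V, ∑ v : V, (if G.Adj u v then
          (3/2) * (w u v * (‖f u - s u v * f v‖ * (‖f u‖ + ‖f v‖))) else 0)) = (3/2) * Q2 := by
      rw [hQ2_def, Finset.mul_sum]
      refine Finset.sum_congr rfl fun u _ => ?_
      rw [Finset.mul_sum]
      refine Finset.sum_congr rfl fun v _ => ?_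
      by_cases hadj : G.Adj u v <;> simp [hadj]
    linarith
  -- Cauchy-Schwarz step
  set N2 : ℝ := ∑ u : V, ∑ v : V, if G.Adj u v then w u v * ‖f u - s u v * f v‖ ^ 2 else 0
    with hN2_def
  set P2 : ℝ := ∑ u : V, ∑ v : V, if G.Adj u v then w u v * (‖f u‖ + ‖f v‖) ^ 2 else 0
    with hP2_def
  have hRN : R = ((1/2) * N2) / D := rfl
  have hN2_nonneg : 0 ≤ N2 := by
    refine Finset.sum_nonneg fun u _ => Finset.sum_nonneg fun v _ => ?_
    split_ifs with h
    · exact mul_nonneg (hw_pos u v h).le (sq_nonneg _)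
    · exact le_refl 0
  have hP2_nonneg : 0 ≤ P2 := by
    refine Finset.sum_nonneg fun u _ => Finset.sum_nonneg fun v _ => ?_
    split_ifs with h
    · exact mul_nonneg (hw_pos u v h).le (sq_nonneg _)
    · exact le_refl 0
  have hQ2_nonneg : 0 ≤ Q2 := by
    refine Finset.sum_nonneg fun u _ => Finset.sum_nonneg fun v _ => ?_
    split_ifs with h
    · exact mul_nonneg (hw_pos u v h).le
        (mul_nonneg (norm_nonneg _) (by positivity))
    · exact le_refl 0
  have hR_nonneg : 0 ≤ R := by
    rw [hRN]
    exact div_nonneg (by linarith) hD_pos.le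
  have hN2RD : N2 = 2 * (R * D) := by
    rw [hRN, div_mul_cancel₀ _ hD_pos.ne']
    ring
  have hdeg : ∀ u : V, (∑ v : V, if G.Adj u v then w u v else 0) ≤ d * μ u := by
    intro u
    have h1 : (∑ v : V, if G.Adj u v then w u v else 0) / μ u ≤ d := by
      rw [hd_def]
      unfold dmu
      exact le_ciSup (Set.Finite.bddAbove (Set.finite_range
        (fun u : V => (∑ v : V, if G.Adj u v then w u v else 0) / μ u))) u
    rwa [div_le_iff₀ (hμ u)] at h1
  have hdeg_nonneg : ∀ u : V, 0 ≤ ∑ v : V, if G.Adj u v then w u v else 0 := by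
    intro u
    refine Finset.sum_nonneg fun v _ => ?_
    split_ifs with h
    · exact (hw_pos u v h).le
    · exact le_refl 0
  have hd_nonneg : 0 ≤ d := by
    obtain ⟨u0⟩ := (inferInstance : Nonempty V)
    have := hdeg u0
    nlinarith [hμ u0, hdeg_nonneg u0]
  have hP2_le : P2 ≤ 4 * (d * D) := by
    have step1 : P2 ≤ ∑ u : V, ∑ v : V, if G.Adj u v then w u v * (2 * (a u + a v)) else 0 := by
      refine Finset.sum_le_sum fun u _ => Finset.sum_le_sum fun v _ => ?_
      split_ifs with h
      · refine mul_le_mul_of_nonneg_left ?_ (hw_pos u v h).le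
        have hau : a u = ‖f u‖^2 := rfl
        have hav : a v = ‖f v‖^2 := rfl
        rw [hau, hav]
        nlinarith [sq_nonneg (‖f u‖ - ‖f v‖)]
      · exact le_refl 0
    have step2 : (∑ u : V, ∑ v : V, if G.Adj u v then w u v * (2 * (a u + a v)) else 0)
        = 2 * ((∑ u : V, ∑ v : V, if G.Adj u v then w u v * a u else 0)
          + (∑ u : V, ∑ v : V, if G.Adj u v then w u v * a v else 0)) := by
      have hAB : (∑ u : V, ∑ v : V, if G.Adj u v then w u v * a u else 0)
            + (∑ u : V, ∑ v : V, if G.Adj u v then w u v * a v else 0)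
          = ∑ u : V, ∑ v : V, ((if G.Adj u v then w u v * a u else 0)
              + (if G.Adj u v then w u v * a v else 0)) := by
        rw [← Finset.sum_add_distrib]
        exact Finset.sum_congr rfl fun u _ => (Finset.sum_add_distrib).symm
      rw [hAB, Finset.mul_sum]
      refine Finset.sum_congr rfl fun u _ => ?_
      rw [Finset.mul_sum]
      refine Finset.sum_congr rfl fun v _ => ?_
      split_ifs with h <;> ring
    have step3 : (∑ u : V, ∑ v : V, if G.Adj u v then w u v * a v else 0)
        = ∑ u : V, ∑ v : V, if G.Adj u v then w u v * a u else 0 := by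
      rw [Finset.sum_comm]
      refine Finset.sum_congr rfl fun u _ => Finset.sum_congr rfl fun v _ => ?_
      by_cases h : G.Adj u v
      · rw [if_pos h.symm, if_pos h, hw_sym v u]
      · rw [if_neg (fun hh => h hh.symm), if_neg h]
    have step4 : (∑ u : V, ∑ v : V, if G.Adj u v then w u v * a u else 0)
        = ∑ u : V, a u * (∑ v : V, if G.Adj u v then w u v else 0) := by
      refine Finset.sum_congr rfl fun u _ => ?_
      rw [Finset.mul_sum]
      refine Finset.sum_congr rfl fun v _ => ?_
      split_ifs with h <;> ring
    have step5 : (∑ u : V, a u * (∑ v : V, if G.Adj u v then w u v else 0))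
        ≤ ∑ u : V, a u * (d * μ u) := by
      refine Finset.sum_le_sum fun u _ => ?_
      exact mul_le_mul_of_nonneg_left (hdeg u) (ha_nonneg u)
    have step6 : (∑ u : V, a u * (d * μ u)) = d * D := by
      rw [hD_def, Finset.mul_sum]
      exact Finset.sum_congr rfl fun u _ => by ring
    calc P2 ≤ _ := step1
      _ = _ := step2
      _ ≤ 4 * (d * D) := by rw [step3, step4]; linarith [step5, step6 ▸ step5]
  have hcs : Q2 ^ 2 ≤ N2 * P2 := by
    have key := Finset.sum_mul_sq_le_sq_mul_sq (univ : Finset (V × V))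
      (fun p => if G.Adj p.1 p.2 then Real.sqrt (w p.1 p.2) * ‖f p.1 - s p.1 p.2 * f p.2‖ else 0)
      (fun p => if G.Adj p.1 p.2 then Real.sqrt (w p.1 p.2) * (‖f p.1‖ + ‖f p.2‖) else 0)
    have e1 : (∑ p : V × V, (if G.Adj p.1 p.2 then Real.sqrt (w p.1 p.2) * ‖f p.1 - s p.1 p.2 * f p.2‖ else 0)
          * (if G.Adj p.1 p.2 then Real.sqrt (w p.1 p.2) * (‖f p.1‖ + ‖f p.2‖) else 0)) = Q2 := by
      rw [hQ2_def, Fintype.sum_prod_type]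
      refine Finset.sum_congr rfl fun u _ => Finset.sum_congr rfl fun v _ => ?_
      split_ifs with h
      · have hw := Real.mul_self_sqrt (hw_pos u v h).le
        calc Real.sqrt (w u v) * ‖f u - s u v * f v‖ * (Real.sqrt (w u v) * (‖f u‖ + ‖f v‖))
            = Real.sqrt (w u v) * Real.sqrt (w u v) * (‖f u - s u v * f v‖ * (‖f u‖ + ‖f v‖)) := by
              ring
          _ = w u v * (‖f u - s u v * f v‖ * (‖f u‖ + ‖f v‖)) := by rw [hw]
      · ring
    have e2 : (∑ p : V × V, (if G.Adj p.1 p.2 then Real.sqrt (w p.1 p.2) * ‖f p.1 - s p.1 p.2 * f p.2‖ else 0) ^ 2) = N2 := by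
      rw [hN2_def, Fintype.sum_prod_type]
      refine Finset.sum_congr rfl fun u _ => Finset.sum_congr rfl fun v _ => ?_
      split_ifs with h
      · have hw := Real.sq_sqrt (hw_pos u v h).le
        calc (Real.sqrt (w u v) * ‖f u - s u v * f v‖) ^ 2
            = Real.sqrt (w u v) ^ 2 * ‖f u - s u v * f v‖ ^ 2 := by ring
          _ = w u v * ‖f u - s u v * f v‖ ^ 2 := by rw [hw]
      · ring
    have e3 : (∑ p : V × V, (if G.Adj p.1 p.2 then Real.sqrt (w p.1 p.2) * (‖f p.1‖ + ‖f p.2‖) else 0) ^ 2) = P2 := by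
      rw [hP2_def, Fintype.sum_prod_type]
      refine Finset.sum_congr rfl fun u _ => Finset.sum_congr rfl fun v _ => ?_
      split_ifs with h
      · have hw := Real.sq_sqrt (hw_pos u v h).le
        calc (Real.sqrt (w u v) * (‖f u‖ + ‖f v‖)) ^ 2
            = Real.sqrt (w u v) ^ 2 * (‖f u‖ + ‖f v‖) ^ 2 := by ring
          _ = w u v * (‖f u‖ + ‖f v‖) ^ 2 := by rw [hw]
      · ring
    rw [e1, e2, e3] at key
    exact key
  have hQ2_le : (1/2) * Q2 ≤ Real.sqrt (2 * d * R) * D := by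
    have h1 : ((1/2) * Q2) ^ 2 ≤ 2 * d * R * D ^ 2 := by
      have h2 : N2 * P2 ≤ (2 * (R * D)) * (4 * (d * D)) := by
        rw [← hN2RD]
        exact mul_le_mul_of_nonneg_left hP2_le hN2_nonneg
      nlinarith [hcs]
    have h3 : (1/2) * Q2 ≤ Real.sqrt (2 * d * R * D ^ 2) := by
      rw [Real.le_sqrt (by linarith) (by nlinarith [sq_nonneg D])]
      exact h1
    calc (1/2) * Q2 ≤ _ := h3
      _ = Real.sqrt (2 * d * R) * D := by
          rw [Real.sqrt_mul (by nlinarith), Real.sqrt_sq hD_pos.le]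
  -- the global bound
  have big : ∑ i ∈ range n, δ i * (frusIdx G w s (S (b i)) + bdry G w (S (b i))) ≤ K * D := by
    have stepA : ∑ i ∈ range n, δ i * (frusIdx G w s (S (b i)) + bdry G w (S (b i)))
        ≤ ∑ i ∈ range n, δ i *
          (((1/2) * ∑ u ∈ S (b i), ∑ v ∈ S (b i), if G.Adj u v then w u v * c u v else 0)
            + bdry G w (S (b i))) := by
      refine Finset.sum_le_sum fun i _ => ?_
      exact mul_le_mul_of_nonneg_left (add_le_add_left (frus_le (b i)) _) (hδ_nonneg i)
    calc ∑ i ∈ range n, δ i * (frusIdx G w s (S (b i)) + bdry G w (S (b i)))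
        ≤ _ := stepA
      _ = _ := main_le1
      _ ≤ (3/2) * ((1/2) * Q2) := main_le2
      _ ≤ (3/2) * (Real.sqrt (2 * d * R) * D) := by linarith [hQ2_le]
      _ = K * D := by rw [hK_def]; ring
  -- pigeonhole
  have hfilter_eq : ∀ t : ℝ, (Finset.univ.filter fun u => Real.sqrt t ≤ ‖f u‖) = S t := by
    intro t
    ext u
    simp only [hS_def, Finset.mem_filter, Finset.mem_univ, true_and]
    have hau : a u = ‖f u‖ ^ 2 := rfl
    rw [hau, Real.sqrt_le_iff]
    simp [norm_nonneg]
  have hvolpos : ∀ i, i < n → 0 < vol μ (S (b i)) := by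
    intro i hi
    have hmem : e ⟨i, hi⟩ ∈ S (b i) := by
      simp only [hS_def, Finset.mem_filter, Finset.mem_univ, true_and]
      exact le_of_eq (by simp [hb_def, dif_pos hi])
    exact Finset.sum_pos (fun u _ => hμ u) ⟨_, hmem⟩
  have hb_le_sup : ∀ i, b i ≤ ⨆ u : V, a u := by
    intro i
    simp only [hb_def]
    split
    · exact le_ciSup (Set.Finite.bddAbove (Set.finite_range a)) _
    · obtain ⟨u0⟩ := (inferInstance : Nonempty V)
      exact (ha_nonneg u0).trans (le_ciSup (Set.Finite.bddAbove (Set.finite_range a)) u0)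
  by_contra hcon
  push_neg at hcon
  have hKlt : ∀ i, i < n → K * vol μ (S (b i)) < frusIdx G w s (S (b i)) + bdry G w (S (b i)) := by
    intro i hi
    have h := hcon (b i) (hb_nonneg i) (hb_le_sup i)
    rw [hfilter_eq (b i)] at h
    exact (lt_div_iff₀ (hvolpos i hi)).mp h
  have hex : ∃ i ∈ range n, 0 < δ i * vol μ (S (b i)) := by
    by_contra hcon2
    push_neg at hcon2
    have : D ≤ 0 := vol_sum ▸ Finset.sum_nonpos hcon2
    linarith
  have hlt : K * D < ∑ i ∈ range n, δ i * (frusIdx G w s (S (b i)) + bdry G w (S (b i))) := by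
    have h0 : K * D = ∑ i ∈ range n, δ i * (K * vol μ (S (b i))) := by
      rw [← vol_sum, Finset.mul_sum]
      exact Finset.sum_congr rfl fun i _ => by ring
    rw [h0]
    obtain ⟨i0, hi0mem, hi0⟩ := hex
    refine Finset.sum_lt_sum (fun i hi => ?_) ⟨i0, hi0mem, ?_⟩
    · exact mul_le_mul_of_nonneg_left (hKlt i (mem_range.mp hi)).le (hδ_nonneg i)
    · have hi0n : i0 < n := mem_range.mp hi0mem
      have hvol0 := hvolpos i0 hi0n
      have hδ0 : 0 < δ i0 := by
        rcases (hδ_nonneg i0).lt_or_eq with h | h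
        · exact h
        · exfalso; rw [← h] at hi0; simp at hi0
      exact mul_lt_mul_of_pos_left (hKlt i0 hi0n) hδ0
  linarith
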